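/- For every n ≥ 2, the spectral radius of B_n^s satisfies ρ(B_n^s) < 3; equivalently, det(λ I_n − B_n^s) > 0 for every λ ≥ 3. -/

import Mathlib

open Matrix Real

noncomputable def bS (n : ℕ) : Matrix (Fin n) (Fin n) ℝ := fun i j =>
  if i = j then (if (i : ℕ) = n - 1 then 2 else 1)
  else if (i : ℕ) + 1 = (j : ℕ) ∨ (j : ℕ) + 1 = (i : ℕ) then
    (if (i : ℕ) = n - 1 ∨ (j : ℕ) = n - 1 then -1 else -1/2)
  else 0

def eigenAbsSet {n : ℕ} (A : Matrix (Fin n) (Fin n) ℝ) : Set ℝ :=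
  {r : ℝ | ∃ μ : ℝ, (μ • (1 : Matrix (Fin n) (Fin n) ℝ) - A).det = 0 ∧ r = |μ|}

noncomputable def specRad {n : ℕ} (A : Matrix (Fin n) (Fin n) ℝ) : ℝ :=
  sSup (eigenAbsSet A)

open Finset

/-- natural-number version of the entries of `bS`. -/
noncomputable def bEnt (n : ℕ) (i j : ℕ) : ℝ :=
  if i = j then (if i = n - 1 then 2 else 1)
  else if i + 1 = j ∨ j + 1 = i then
    (if i = n - 1 ∨ j = n - 1 then -1 else -1/2)
  else 0

/-- extension of a `Fin n` vector by zero. -/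
noncomputable def Xe (n : ℕ) (x : Fin n → ℝ) : ℕ → ℝ :=
  fun k => if h : k < n then x ⟨k, h⟩ else 0

noncomputable def Dd (n : ℕ) : ℕ → ℝ := fun i => if i = n - 1 then 2 else 1
noncomputable def cc (n : ℕ) : ℕ → ℝ := fun i => if i = n - 2 then 1 else 1/2

lemma key_identity (n : ℕ) (d c y : ℕ → ℝ) :
    ∑ i ∈ range n, d i * y i ^ 2 + ∑ i ∈ range (n - 1), 2 * c i * (y i * y (i + 1))
      = ∑ i ∈ range (n - 1), c i * (y i + y (i + 1)) ^ 2
        + ∑ i ∈ range n,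
            (d i - (if i + 1 < n then c i else 0) - (if 0 < i then c (i - 1) else 0))
              * y i ^ 2 := by
  rcases n with _ | m
  · simp
  · have hm : m + 1 - 1 = m := rfl
    rw [hm]
    have h1 : ∑ i ∈ range (m + 1), (if i + 1 < m + 1 then c i else 0) * y i ^ 2
        = ∑ i ∈ range m, c i * y i ^ 2 := by
      rw [Finset.sum_range_succ, if_neg (lt_irrefl (m + 1)), zero_mul, add_zero]
      refine Finset.sum_congr rfl fun i hi => ?_
      rw [if_pos (by have := Finset.mem_range.mp hi; omega : i + 1 < m + 1)]
    have h2 : ∑ i ∈ range (m + 1), (if 0 < i then c (i - 1) else 0) * y i ^ 2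
        = ∑ i ∈ range m, c i * y (i + 1) ^ 2 := by
      rw [Finset.sum_range_succ']
      simp
    have h3 : ∑ i ∈ range m, c i * (y i + y (i + 1)) ^ 2
        = ∑ i ∈ range m, c i * y i ^ 2 + ∑ i ∈ range m, c i * y (i + 1) ^ 2
          + ∑ i ∈ range m, 2 * c i * (y i * y (i + 1)) := by
      rw [← Finset.sum_add_distrib, ← Finset.sum_add_distrib]
      refine Finset.sum_congr rfl fun i _ => by ring
    have h4 : ∑ i ∈ range (m + 1),
        (d i - (if i + 1 < m + 1 then c i else 0) - (if 0 < i then c (i - 1) else 0)) * y i ^ 2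
        = ∑ i ∈ range (m + 1), d i * y i ^ 2
          - ∑ i ∈ range (m + 1), (if i + 1 < m + 1 then c i else 0) * y i ^ 2
          - ∑ i ∈ range (m + 1), (if 0 < i then c (i - 1) else 0) * y i ^ 2 := by
      rw [← Finset.sum_sub_distrib, ← Finset.sum_sub_distrib]
      refine Finset.sum_congr rfl fun i _ => by ring
    rw [h3, h4, h1, h2]
    ring

lemma bS_apply (n : ℕ) (i j : Fin n) : bS n i j = bEnt n i j := by
  simp only [bS, bEnt, Fin.ext_iff]

lemma Xe_apply (n : ℕ) (x : Fin n → ℝ) (i : Fin n) : Xe n x i = x i := by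
  simp [Xe]

lemma innerSumB (n : ℕ) (hn : 2 ≤ n) (x : Fin n → ℝ) (i : ℕ) (hi : i < n) :
    ∑ j ∈ range n, bEnt n i j * Xe n x j
      = Dd n i * Xe n x i - cc n i * Xe n x (i + 1)
        - (if 0 < i then cc n (i - 1) * Xe n x (i - 1) else 0) := by
  have hsplit : ∀ j ∈ range n, bEnt n i j * Xe n x j
      = (if j = i then Dd n i * Xe n x i else 0)
        + (if j = i + 1 then -(cc n i) * Xe n x (i + 1) else 0)
        + (if i = j + 1 then -(cc n (i - 1)) * Xe n x (i - 1) else 0) := by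
    intro j hj
    have hjn : j < n := Finset.mem_range.mp hj
    unfold bEnt Dd cc
    by_cases h1 : i = j
    · subst h1
      split_ifs <;> (first | ring1 | (exfalso; omega) | (exfalso; rcases ‹_ ∨ _› with h | h <;> omega) | (exfalso; simp_all) | (exfalso; rcases ‹¬(_ ∨ _)› (Or.inr rfl)))
    · by_cases h2 : j = i + 1
      · subst h2
        split_ifs <;> (first | ring1 | (exfalso; omega) | (exfalso; rcases ‹_ ∨ _› with h | h <;> omega) | (exfalso; simp_all) | (exfalso; rcases ‹¬(_ ∨ _)› (Or.inr rfl)))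
      · by_cases h3 : i = j + 1
        · subst h3
          simp only [Nat.add_sub_cancel]
          split_ifs <;> (first | ring1 | (exfalso; omega) | (exfalso; exact ‹¬(_ ∨ True)› (Or.inr trivial)) | (exfalso; rcases ‹_ ∨ _› with h | h <;> omega) | (exfalso; simp_all) | (exfalso; rcases ‹¬(_ ∨ _)› (Or.inr rfl)))
        · split_ifs <;> (first | ring1 | (exfalso; omega) | (exfalso; rcases ‹_ ∨ _› with h | h <;> omega) | (exfalso; simp_all) | (exfalso; rcases ‹¬(_ ∨ _)› (Or.inr rfl)))
  rw [Finset.sum_congr rfl hsplit, Finset.sum_add_distrib, Finset.sum_add_distrib]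
  have e1 : ∑ j ∈ range n, (if j = i then Dd n i * Xe n x i else 0) = Dd n i * Xe n x i := by
    rw [Finset.sum_ite_eq' (range n) i fun _ => Dd n i * Xe n x i,
      if_pos (Finset.mem_range.mpr hi)]
  have e2 : ∑ j ∈ range n, (if j = i + 1 then -(cc n i) * Xe n x (i + 1) else 0)
      = -(cc n i) * Xe n x (i + 1) := by
    rw [Finset.sum_ite_eq' (range n) (i + 1) fun _ => -(cc n i) * Xe n x (i + 1)]
    by_cases h : i + 1 < n
    · rw [if_pos (Finset.mem_range.mpr h)]
    · rw [if_neg (fun hc => h (Finset.mem_range.mp hc))]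
      have h0 : Xe n x (i + 1) = 0 := by unfold Xe; rw [dif_neg h]
      rw [h0, mul_zero]
  have e3 : ∑ j ∈ range n, (if i = j + 1 then -(cc n (i - 1)) * Xe n x (i - 1) else 0)
      = -(if 0 < i then cc n (i - 1) * Xe n x (i - 1) else 0) := by
    rcases i with _ | k
    · simp
    · have hc : ∀ j ∈ range n, (if k + 1 = j + 1 then -(cc n (k + 1 - 1)) * Xe n x (k + 1 - 1) else 0)
          = (if j = k then -(cc n k) * Xe n x k else 0) := by
        intro j _
        by_cases h : j = k
        · subst h; rw [if_pos rfl, if_pos rfl]; norm_num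
        · rw [if_neg (by omega), if_neg h]
      rw [Finset.sum_congr rfl hc,
        Finset.sum_ite_eq' (range n) k fun _ => -(cc n k) * Xe n x k,
        if_pos (Finset.mem_range.mpr (by omega)), if_pos (Nat.succ_pos k)]
      norm_num
  rw [e1, e2, e3]
  ring

lemma bS_quad (n : ℕ) (hn : 2 ≤ n) (x : Fin n → ℝ) :
    x ⬝ᵥ (bS n *ᵥ x)
      = ∑ i ∈ range n, Dd n i * Xe n x i ^ 2
        - ∑ i ∈ range (n - 1), 2 * cc n i * (Xe n x i * Xe n x (i + 1)) := by
  have step1 : x ⬝ᵥ (bS n *ᵥ x)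
      = ∑ i ∈ range n, Xe n x i * (∑ j ∈ range n, bEnt n i j * Xe n x j) := by
    rw [dotProduct]
    rw [← Fin.sum_univ_eq_sum_range (fun i => Xe n x i * (∑ j ∈ range n, bEnt n i j * Xe n x j)) n]
    refine Finset.sum_congr rfl fun i _ => ?_
    rw [Xe_apply]
    congr 1
    simp only [mulVec, dotProduct]
    rw [← Fin.sum_univ_eq_sum_range (fun j => bEnt n (i : ℕ) j * Xe n x j) n]
    refine Finset.sum_congr rfl fun j _ => by rw [bS_apply, Xe_apply]
  rw [step1]
  have step2 : ∑ i ∈ range n, Xe n x i * (∑ j ∈ range n, bEnt n i j * Xe n x j)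
      = ∑ i ∈ range n, (Dd n i * Xe n x i ^ 2 - cc n i * (Xe n x i * Xe n x (i + 1))
          - (if 0 < i then cc n (i - 1) * (Xe n x i * Xe n x (i - 1)) else 0)) := by
    refine Finset.sum_congr rfl fun i hi => ?_
    rw [innerSumB n hn x i (Finset.mem_range.mp hi)]
    by_cases h : 0 < i
    · rw [if_pos h, if_pos h]; ring
    · rw [if_neg h, if_neg h]; ring
  rw [step2]
  obtain ⟨m, rfl⟩ : ∃ m, n = m + 1 := ⟨n - 1, by omega⟩
  have hm : m + 1 - 1 = m := rfl
  rw [hm]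
  rw [Finset.sum_sub_distrib, Finset.sum_sub_distrib]
  have c1 : ∑ i ∈ range (m + 1), cc (m + 1) i * (Xe (m + 1) x i * Xe (m + 1) x (i + 1))
      = ∑ i ∈ range m, cc (m + 1) i * (Xe (m + 1) x i * Xe (m + 1) x (i + 1)) := by
    rw [Finset.sum_range_succ]
    have h0 : Xe (m + 1) x (m + 1) = 0 := by unfold Xe; rw [dif_neg (by omega)]
    rw [h0]; ring
  have c2 : ∑ i ∈ range (m + 1),
        (if 0 < i then cc (m + 1) (i - 1) * (Xe (m + 1) x i * Xe (m + 1) x (i - 1)) else 0)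
      = ∑ i ∈ range m, cc (m + 1) i * (Xe (m + 1) x i * Xe (m + 1) x (i + 1)) := by
    rw [Finset.sum_range_succ']
    simp only [Nat.succ_pos, if_pos, Nat.add_sub_cancel, if_neg (lt_irrefl 0), add_zero]
    refine Finset.sum_congr rfl fun i _ => by ring
  rw [c1, c2]
  have c3 : ∑ i ∈ range m, 2 * cc (m + 1) i * (Xe (m + 1) x i * Xe (m + 1) x (i + 1))
      = ∑ i ∈ range m, cc (m + 1) i * (Xe (m + 1) x i * Xe (m + 1) x (i + 1))
        + ∑ i ∈ range m, cc (m + 1) i * (Xe (m + 1) x i * Xe (m + 1) x (i + 1)) := by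
    rw [← Finset.sum_add_distrib]
    exact Finset.sum_congr rfl fun i _ => by ring
  rw [c3]
  ring

lemma dot_self_eq (n : ℕ) (x : Fin n → ℝ) : x ⬝ᵥ x = ∑ i ∈ range n, Xe n x i ^ 2 := by
  rw [dotProduct, ← Fin.sum_univ_eq_sum_range (fun i => Xe n x i ^ 2) n]
  exact Finset.sum_congr rfl fun i _ => by rw [Xe_apply]; ring

lemma Xe_exists_ne (n : ℕ) (x : Fin n → ℝ) (hx : x ≠ 0) : ∃ k, k < n ∧ Xe n x k ≠ 0 := by
  obtain ⟨k, hk⟩ := Function.ne_iff.mp hx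
  exact ⟨k, k.isLt, by rw [Xe_apply]; simpa using hk⟩

lemma cc_nonneg (n i : ℕ) : 0 ≤ cc n i := by unfold cc; split_ifs <;> norm_num

lemma posdef_quad (n : ℕ) (hn : 2 ≤ n) (l : ℝ) (hl : 3 ≤ l) (x : Fin n → ℝ) (hx : x ≠ 0) :
    0 < x ⬝ᵥ ((l • (1 : Matrix (Fin n) (Fin n) ℝ) - bS n) *ᵥ x) := by
  have hform : x ⬝ᵥ ((l • (1 : Matrix (Fin n) (Fin n) ℝ) - bS n) *ᵥ x)
      = ∑ i ∈ range n, (l - Dd n i) * Xe n x i ^ 2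
        + ∑ i ∈ range (n - 1), 2 * cc n i * (Xe n x i * Xe n x (i + 1)) := by
    rw [sub_mulVec, dotProduct_sub, smul_mulVec, one_mulVec, dotProduct_smul,
      smul_eq_mul, dot_self_eq, bS_quad n hn]
    have h1 : ∑ i ∈ range n, (l - Dd n i) * Xe n x i ^ 2
        = l * ∑ i ∈ range n, Xe n x i ^ 2 - ∑ i ∈ range n, Dd n i * Xe n x i ^ 2 := by
      rw [Finset.mul_sum, ← Finset.sum_sub_distrib]
      exact Finset.sum_congr rfl fun i _ => by ring
    rw [h1]; ring
  rw [hform, key_identity n (fun i => l - Dd n i) (cc n) (Xe n x)]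
  have hsq : ∀ i ∈ range (n - 1), 0 ≤ cc n i * (Xe n x i + Xe n x (i + 1)) ^ 2 :=
    fun i _ => mul_nonneg (cc_nonneg n i) (sq_nonneg _)
  have hr : ∀ i ∈ range n,
      0 ≤ ((l - Dd n i) - (if i + 1 < n then cc n i else 0)
            - (if 0 < i then cc n (i - 1) else 0)) * Xe n x i ^ 2 := by
    intro i hi
    have hin : i < n := Finset.mem_range.mp hi
    refine mul_nonneg ?_ (sq_nonneg _)
    unfold Dd cc
    split_ifs <;> (first | linarith | (exfalso; omega))
  by_cases hz : ∀ j, j < n - 1 → Xe n x j = 0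
  · obtain ⟨k, hk, hkne⟩ := Xe_exists_ne n x hx
    have hk1 : k = n - 1 := by
      by_contra h
      exact hkne (hz k (by omega))
    subst hk1
    have hterm : 0 < cc n (n - 2) * (Xe n x (n - 2) + Xe n x (n - 2 + 1)) ^ 2 := by
      have e1 : cc n (n - 2) = 1 := if_pos rfl
      have e2 : Xe n x (n - 2) = 0 := hz (n - 2) (by omega)
      have e3 : n - 2 + 1 = n - 1 := by omega
      rw [e1, e2, e3, one_mul, zero_add]
      exact pow_two_pos_of_ne_zero hkne
    have hle : cc n (n - 2) * (Xe n x (n - 2) + Xe n x (n - 2 + 1)) ^ 2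
        ≤ ∑ i ∈ range (n - 1), cc n i * (Xe n x i + Xe n x (i + 1)) ^ 2 :=
      Finset.single_le_sum hsq (Finset.mem_range.mpr (by omega))
    have h2 := Finset.sum_nonneg hr
    linarith
  · push_neg at hz
    obtain ⟨j, hj, hjne⟩ := hz
    have hrj : (1 : ℝ) / 2 ≤ (l - Dd n j) - (if j + 1 < n then cc n j else 0)
        - (if 0 < j then cc n (j - 1) else 0) := by
      unfold Dd cc
      split_ifs <;> (first | linarith | (exfalso; omega))
    have hterm : (1 : ℝ) / 2 * Xe n x j ^ 2
        ≤ ((l - Dd n j) - (if j + 1 < n then cc n j else 0)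
            - (if 0 < j then cc n (j - 1) else 0)) * Xe n x j ^ 2 :=
      mul_le_mul_of_nonneg_right hrj (sq_nonneg _)
    have hle : ((l - Dd n j) - (if j + 1 < n then cc n j else 0)
          - (if 0 < j then cc n (j - 1) else 0)) * Xe n x j ^ 2
        ≤ ∑ i ∈ range n,
            ((l - Dd n i) - (if i + 1 < n then cc n i else 0)
              - (if 0 < i then cc n (i - 1) else 0)) * Xe n x i ^ 2 :=
      Finset.single_le_sum hr (Finset.mem_range.mpr (by omega))
    have h1 := Finset.sum_nonneg hsq
    have h3 : 0 < (1 : ℝ) / 2 * Xe n x j ^ 2 := by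
      have := pow_two_pos_of_ne_zero hjne
      linarith
    linarith

lemma negdef_quad (n : ℕ) (hn : 2 ≤ n) (t : ℝ) (ht : 3 ≤ t) (x : Fin n → ℝ) (hx : x ≠ 0) :
    0 < x ⬝ᵥ ((bS n + t • (1 : Matrix (Fin n) (Fin n) ℝ)) *ᵥ x) := by
  set y : ℕ → ℝ := fun i => (-1 : ℝ) ^ i * Xe n x i with hy
  have hysq : ∀ i, y i ^ 2 = Xe n x i ^ 2 := by
    intro i
    have h1 : ((-1 : ℝ) ^ i) ^ 2 = 1 := by
      rw [← pow_mul, mul_comm, pow_mul]; norm_num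
    rw [hy]; simp only []
    calc ((-1 : ℝ) ^ i * Xe n x i) ^ 2 = ((-1 : ℝ) ^ i) ^ 2 * Xe n x i ^ 2 := by ring
    _ = Xe n x i ^ 2 := by rw [h1, one_mul]
  have hycross : ∀ i, y i * y (i + 1) = -(Xe n x i * Xe n x (i + 1)) := by
    intro i
    have h1 : ((-1 : ℝ) ^ i) * ((-1 : ℝ) ^ (i + 1)) = -1 := by
      rw [pow_succ]
      calc ((-1 : ℝ) ^ i) * ((-1 : ℝ) ^ i * -1) = -(((-1 : ℝ) ^ i) ^ 2) := by ring
      _ = -1 := by rw [← pow_mul, mul_comm, pow_mul]; norm_num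
    rw [hy]; simp only []
    calc (-1 : ℝ) ^ i * Xe n x i * ((-1 : ℝ) ^ (i + 1) * Xe n x (i + 1))
        = ((-1 : ℝ) ^ i * (-1 : ℝ) ^ (i + 1)) * (Xe n x i * Xe n x (i + 1)) := by ring
    _ = -(Xe n x i * Xe n x (i + 1)) := by rw [h1]; ring
  have hform : x ⬝ᵥ ((bS n + t • (1 : Matrix (Fin n) (Fin n) ℝ)) *ᵥ x)
      = ∑ i ∈ range n, (t + Dd n i) * y i ^ 2
        + ∑ i ∈ range (n - 1), 2 * cc n i * (y i * y (i + 1)) := by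
    rw [add_mulVec, dotProduct_add, smul_mulVec, one_mulVec, dotProduct_smul,
      smul_eq_mul, dot_self_eq, bS_quad n hn]
    have h1 : ∑ i ∈ range n, (t + Dd n i) * y i ^ 2
        = t * ∑ i ∈ range n, Xe n x i ^ 2 + ∑ i ∈ range n, Dd n i * Xe n x i ^ 2 := by
      rw [Finset.mul_sum, ← Finset.sum_add_distrib]
      exact Finset.sum_congr rfl fun i _ => by rw [hysq i]; ring
    have h2 : ∑ i ∈ range (n - 1), 2 * cc n i * (y i * y (i + 1))
        = -∑ i ∈ range (n - 1), 2 * cc n i * (Xe n x i * Xe n x (i + 1)) := by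
      rw [← Finset.sum_neg_distrib]
      exact Finset.sum_congr rfl fun i _ => by rw [hycross i]; ring
    rw [h1, h2]; ring
  rw [hform, key_identity n (fun i => t + Dd n i) (cc n) y]
  have hsq : ∀ i ∈ range (n - 1), 0 ≤ cc n i * (y i + y (i + 1)) ^ 2 :=
    fun i _ => mul_nonneg (cc_nonneg n i) (sq_nonneg _)
  have hr : ∀ i ∈ range n,
      0 ≤ ((t + Dd n i) - (if i + 1 < n then cc n i else 0)
            - (if 0 < i then cc n (i - 1) else 0)) * y i ^ 2 := by
    intro i hi
    refine mul_nonneg ?_ (sq_nonneg _)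
    unfold Dd cc
    split_ifs <;> linarith
  obtain ⟨k, hk, hkne⟩ := Xe_exists_ne n x hx
  have hykne : y k ≠ 0 := by
    rw [hy]; simp only []
    exact mul_ne_zero (by positivity) hkne
  have hrk : (1 : ℝ) / 2 ≤ (t + Dd n k) - (if k + 1 < n then cc n k else 0)
      - (if 0 < k then cc n (k - 1) else 0) := by
    unfold Dd cc
    split_ifs <;> linarith
  have hterm : (1 : ℝ) / 2 * y k ^ 2
      ≤ ((t + Dd n k) - (if k + 1 < n then cc n k else 0)
          - (if 0 < k then cc n (k - 1) else 0)) * y k ^ 2 :=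
    mul_le_mul_of_nonneg_right hrk (sq_nonneg _)
  have hle := Finset.single_le_sum hr (Finset.mem_range.mpr hk)
  have h1 := Finset.sum_nonneg hsq
  have h3 : 0 < (1 : ℝ) / 2 * y k ^ 2 := by
    have := pow_two_pos_of_ne_zero hykne
    linarith
  linarith

lemma bS_herm (n : ℕ) : (bS n).IsHermitian := by
  show (bS n)ᴴ = bS n
  ext i j
  rw [conjTranspose_apply, star_trivial, bS_apply, bS_apply]
  unfold bEnt
  split_ifs <;> (first | rfl | (exfalso; omega))

lemma smul_one_herm (n : ℕ) (l : ℝ) :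
    (l • (1 : Matrix (Fin n) (Fin n) ℝ)).IsHermitian := by
  show (l • (1 : Matrix (Fin n) (Fin n) ℝ))ᴴ = _
  rw [conjTranspose_smul, star_trivial, conjTranspose_one]

lemma posdef_matrix (n : ℕ) (hn : 2 ≤ n) (l : ℝ) (hl : 3 ≤ l) :
    (l • (1 : Matrix (Fin n) (Fin n) ℝ) - bS n).PosDef := by
  refine posDef_iff_dotProduct_mulVec.mpr ⟨(smul_one_herm n l).sub (bS_herm n), fun x hx => ?_⟩
  have := posdef_quad n hn l hl x hx
  simpa using this

lemma negdef_matrix (n : ℕ) (hn : 2 ≤ n) (t : ℝ) (ht : 3 ≤ t) :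
    (bS n + t • (1 : Matrix (Fin n) (Fin n) ℝ)).PosDef := by
  refine posDef_iff_dotProduct_mulVec.mpr ⟨(bS_herm n).add (smul_one_herm n t), fun x hx => ?_⟩
  have := negdef_quad n hn t ht x hx
  simpa using this

lemma det_root_charpoly (n : ℕ) (μ : ℝ)
    (h : (μ • (1 : Matrix (Fin n) (Fin n) ℝ) - bS n).det = 0) :
    ((bS n).charpoly).IsRoot μ := by
  have key : Polynomial.eval μ ((bS n).charpoly)
      = (μ • (1 : Matrix (Fin n) (Fin n) ℝ) - bS n).det := by
    rw [Matrix.charpoly]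
    rw [show Polynomial.eval μ ((charmatrix (bS n)).det)
        = ((charmatrix (bS n)).map (Polynomial.evalRingHom μ)).det from
      (Polynomial.evalRingHom μ).map_det _]
    congr 1
    ext i j
    rw [Matrix.map_apply, charmatrix_apply]
    by_cases hij : i = j
    · subst hij; simp [Matrix.one_apply]
    · simp [Matrix.one_apply_ne hij, Matrix.diagonal_apply_ne _ hij]
  rwa [Polynomial.IsRoot, key]

theorem stmt13 (n : ℕ) (hn : 2 ≤ n) :
    specRad (bS n) < 3 ∧
    (∀ l : ℝ, 3 ≤ l → 0 < (l • (1 : Matrix (Fin n) (Fin n) ℝ) - bS n).det) := by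
  have hdet : ∀ l : ℝ, 3 ≤ l → 0 < (l • (1 : Matrix (Fin n) (Fin n) ℝ) - bS n).det :=
    fun l hl => (posdef_matrix n hn l hl).det_pos
  refine ⟨?_, hdet⟩
  have hlt : ∀ r ∈ eigenAbsSet (bS n), r < 3 := by
    rintro r ⟨μ, hμ, rfl⟩
    by_contra hcon
    push_neg at hcon
    rcases le_or_gt 3 μ with h3 | h3
    · exact absurd hμ (ne_of_gt (hdet μ h3))
    · have hμ3 : μ ≤ -3 := by
        rcases abs_cases μ with ⟨he, _⟩ | ⟨he, _⟩ <;> linarith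
      have ht : 3 ≤ -μ := by linarith
      have hpd := (negdef_matrix n hn (-μ) ht).det_pos
      have heq : μ • (1 : Matrix (Fin n) (Fin n) ℝ) - bS n
          = -(bS n + (-μ) • (1 : Matrix (Fin n) (Fin n) ℝ)) := by
        rw [neg_smul]; abel
      rw [heq, Matrix.det_neg] at hμ
      have : ((-1 : ℝ) ^ Fintype.card (Fin n)) ≠ 0 := by
        apply pow_ne_zero; norm_num
      exact absurd hμ (mul_ne_zero this (ne_of_gt hpd))
  have hfin : (eigenAbsSet (bS n)).Finite := by
    refine Set.Finite.subset (Set.Finite.image abs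
      (Polynomial.finite_setOf_isRoot (Matrix.charpoly_monic (bS n)).ne_zero)) ?_
    rintro r ⟨μ, hμ, rfl⟩
    exact ⟨μ, det_root_charpoly n μ hμ, rfl⟩
  rcases (eigenAbsSet (bS n)).eq_empty_or_nonempty with he | hne
  · unfold specRad
    rw [he, Real.sSup_empty]
    norm_num
  · exact hlt _ (hne.csSup_mem hfin)
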